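/- Let Γ be a group generated by a finite symmetric set S = S⁻¹ ⊆ Γ whose growth function satisfies γ_S(n−1) ≥ C·exp(b·n^α) for every integer n ≥ 1, where C, b > 0 and 0 < α ≤ 1 are real constants. Then for every integer n ≥ 1 such that b·n^α ≥ 1 and Føl(n) < ∞, the Følner function satisfies Føl(n) ≥ ( C / (α·b·n^α) ) · exp( b·n^α − 1/α ). -/

import Mathlib

open scoped Pointwise

variable {G : Type*} [Group G] [DecidableEq G]

/-- The ball of radius `r` in the word metric: elements of `G` expressible as
a product of at most `r` elements of `S`. -/
def wordBall (S : Finset G) : ℕ → Finset G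
  | 0 => {1}
  | r + 1 => wordBall S r ∪ S * wordBall S r

/-- The inner boundary of a finite set `D` with respect to the generating set `S`. -/
def innerBoundary (S D : Finset G) : Finset G :=
  D.filter fun x => ∃ s ∈ S, s * x ∉ D



lemma sdiff_smul_subset_boundary (S D : Finset G) (hsymm : ∀ s ∈ S, s⁻¹ ∈ S)
    {s : G} (hs : s ∈ S) : D \ s • D ⊆ innerBoundary S D := by
  intro x hx
  rw [Finset.mem_sdiff] at hx
  refine Finset.mem_filter.mpr ⟨hx.1, s⁻¹, hsymm s hs, fun h => hx.2 ?_⟩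
  exact Finset.mem_smul_finset.mpr ⟨s⁻¹ * x, h, by simp [smul_eq_mul, mul_assoc]⟩

lemma card_sdiff_smul_le (S : Finset G) (hsymm : ∀ s ∈ S, s⁻¹ ∈ S) (D : Finset G) :
    ∀ k : ℕ, ∀ g ∈ wordBall S k, (D \ g • D).card ≤ k * (innerBoundary S D).card := by
  intro k
  induction k with
  | zero =>
    intro g hg
    simp only [wordBall, Finset.mem_singleton] at hg
    subst hg; simp
  | succ k ih =>
    intro g hg
    rw [wordBall] at hg
    rcases Finset.mem_union.mp hg with h | h
    · exact (ih g h).trans (Nat.mul_le_mul_right _ (Nat.le_succ k))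
    · obtain ⟨s, hs, w, hw, rfl⟩ := Finset.mem_mul.mp h
      have hsub : D \ (s * w) • D ⊆ (D \ s • D) ∪ s • (D \ w • D) := by
        intro x hx
        rw [Finset.mem_sdiff] at hx
        rw [Finset.mem_union]
        by_cases hxs : x ∈ s • D
        · right
          obtain ⟨y, hy, rfl⟩ := Finset.mem_smul_finset.mp hxs
          refine Finset.smul_mem_smul_finset (Finset.mem_sdiff.mpr ⟨hy, fun hyw => hx.2 ?_⟩)
          obtain ⟨z, hz, rfl⟩ := Finset.mem_smul_finset.mp hyw
          exact Finset.mem_smul_finset.mpr ⟨z, hz, by simp [smul_eq_mul, mul_assoc]⟩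
        · exact Or.inl (Finset.mem_sdiff.mpr ⟨hx.1, hxs⟩)
      calc (D \ (s * w) • D).card ≤ ((D \ s • D) ∪ s • (D \ w • D)).card :=
            Finset.card_le_card hsub
        _ ≤ (D \ s • D).card + (s • (D \ w • D)).card := Finset.card_union_le _ _
        _ ≤ (innerBoundary S D).card + k * (innerBoundary S D).card := by
            refine add_le_add (Finset.card_le_card (sdiff_smul_subset_boundary S D hsymm hs)) ?_
            rw [Finset.card_smul_finset]
            exact ih w hw
        _ = (k + 1) * (innerBoundary S D).card := by ring

lemma sum_card_inter_le (D T : Finset G) :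
    ∑ g ∈ T, ((g • D) ∩ D).card ≤ D.card ^ 2 := by
  classical
  rw [← Finset.card_sigma]
  have h := Finset.card_le_card_of_injOn (s := T.sigma fun g => (g • D) ∩ D)
      (t := D ×ˢ D) (fun p => (p.1⁻¹ * p.2, p.2)) ?_ ?_
  · calc (T.sigma fun g => (g • D) ∩ D).card ≤ (D ×ˢ D).card := h
      _ = D.card ^ 2 := by rw [Finset.card_product]; ring
  · rintro ⟨g, x⟩ hp
    rw [Finset.mem_coe, Finset.mem_sigma] at hp
    have hx1 := (Finset.mem_inter.mp hp.2).1
    have hx2 := (Finset.mem_inter.mp hp.2).2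
    rw [Finset.mem_coe, Finset.mem_product]
    constructor
    · have hm := Finset.inv_smul_mem_iff.mpr hx1
      simpa [smul_eq_mul] using hm
    · exact hx2
  · rintro ⟨g, x⟩ - ⟨g', x'⟩ - hEq
    simp only [Prod.mk.injEq] at hEq
    obtain ⟨h1, rfl⟩ := hEq
    have hg : g = g' := inv_injective (mul_right_cancel h1)
    subst hg
    rfl

lemma count_lemma (S : Finset G) (hsymm : ∀ s ∈ S, s⁻¹ ∈ S) (D : Finset G) (k : ℕ) :
    (wordBall S k).card * D.card ≤
      D.card ^ 2 + (wordBall S k).card * (k * (innerBoundary S D).card) := by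
  calc (wordBall S k).card * D.card = ∑ _g ∈ wordBall S k, D.card := by
        rw [Finset.sum_const, smul_eq_mul]
    _ ≤ ∑ g ∈ wordBall S k, (((g • D) ∩ D).card + k * (innerBoundary S D).card) := by
        refine Finset.sum_le_sum fun g hg => ?_
        have h1 := card_sdiff_smul_le S hsymm D k g hg
        have h2 : (D \ g • D).card + (D ∩ g • D).card = D.card :=
          Finset.card_sdiff_add_card_inter D (g • D)
        rw [Finset.inter_comm]
        omega
    _ = (∑ g ∈ wordBall S k, ((g • D) ∩ D).card) + (wordBall S k).card * (k * (innerBoundary S D).card) := by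
        rw [Finset.sum_add_distrib, Finset.sum_const, smul_eq_mul]
    _ ≤ _ := add_le_add_left (sum_card_inter_le D (wordBall S k)) _


theorem chooseR (C b α : ℝ) (hC : 0 < C) (hb : 0 < b) (hα0 : 0 < α) (hα1 : α ≤ 1)
    (n : ℕ) (hn : 1 ≤ n) (hbn : 1 ≤ b * (n : ℝ) ^ α) :
    ∃ r : ℕ, 1 ≤ r ∧ r ≤ n ∧
      (n : ℝ) / (α * (b * (n : ℝ) ^ α)) * Real.exp (b * (n : ℝ) ^ α - 1 / α) ≤
        Real.exp (b * (r : ℝ) ^ α) * ((n : ℝ) - r + 1) := by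
  have hn' : (1:ℝ) ≤ (n:ℝ) := by exact_mod_cast hn
  have hnα : (0:ℝ) < (n:ℝ) ^ α := Real.rpow_pos_of_pos (by linarith) _
  set X : ℝ := b * (n : ℝ) ^ α with hX
  clear_value X
  have hX1 : 1 ≤ X := hbn
  have hX0 : 0 < X := by linarith
  have hαX0 : 0 < α * X := mul_pos hα0 hX0
  by_cases hcase : α * X ≤ 1
  · refine ⟨1, le_rfl, hn, ?_⟩
    have hinv : 1 / α * (α * X) = X := by field_simp
    have h2 : 1 / (α * X) ≤ 1 + (1 / α - X) := by
      rw [div_le_iff₀ hαX0]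
      nlinarith [hinv, mul_nonneg (by linarith : (0:ℝ) ≤ X - 1) (by linarith : (0:ℝ) ≤ 1 - α * X)]
    have h3 : 1 + (1 / α - X) ≤ Real.exp (1 / α - X) := by
      have := Real.add_one_le_exp (1 / α - X)
      linarith
    have h4 : Real.exp (X - 1 / α) * Real.exp (1 / α - X) = 1 := by
      rw [← Real.exp_add]; ring_nf; exact Real.exp_zero
    have h5 : Real.exp (X - 1 / α) ≤ α * X := by
      have h6 : 1 / (α * X) ≤ Real.exp (1 / α - X) := h2.trans h3
      have h7 := mul_le_mul_of_nonneg_left h6 (Real.exp_pos (X - 1 / α)).le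
      rw [h4, mul_one_div] at h7
      exact (div_le_one hαX0).mp h7
    have h8 : (1:ℝ) ≤ Real.exp b := Real.one_le_exp hb.le
    push_cast
    rw [Real.one_rpow]
    have h9 : (n:ℝ) / (α * X) * Real.exp (X - 1 / α) ≤ (n:ℝ) := by
      rw [div_mul_eq_mul_div, div_le_iff₀ hαX0]
      nlinarith [mul_le_mul_of_nonneg_left h5 (by linarith : (0:ℝ) ≤ (n:ℝ))]
    have h10 : (n:ℝ) ≤ Real.exp (b * 1) * ((n:ℝ) - 1 + 1) := by
      rw [mul_one]
      nlinarith [h8, hn']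
    exact h9.trans h10
  · push_neg at hcase
    have hy0 : 0 < 1 / (α * X) := by positivity
    have hy1 : 1 / (α * X) < 1 := by rw [div_lt_one hαX0]; linarith
    set y : ℝ := 1 / (α * X) with hyd
    have hXy : X * y = 1 / α := by
      rw [hyd]; field_simp
    clear_value y
    have h1y : 0 < 1 - y := by linarith
    set v : ℝ := (1 - y) ^ (1 / α) with hvd
    have hv0 : 0 < v := Real.rpow_pos_of_pos h1y _
    have hv1 : v ≤ 1 - y := by
      have h := Real.rpow_le_rpow_of_exponent_ge h1y (by linarith)
        (by rw [le_div_iff₀ hα0]; linarith : (1:ℝ) ≤ 1 / α)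
      rwa [Real.rpow_one] at h
    have hvα : v ^ α = 1 - y := by
      rw [hvd, ← Real.rpow_mul h1y.le, one_div_mul_cancel hα0.ne', Real.rpow_one]
    clear_value v
    have hn0 : (0:ℝ) < (n:ℝ) := by linarith
    set u : ℝ := (n:ℝ) * v with hud
    clear_value u
    have hu0 : 0 < u := hud ▸ mul_pos hn0 hv0
    have hun : u ≤ (n:ℝ) := by nlinarith [mul_le_mul_of_nonneg_left (by linarith : v ≤ 1) hn0.le]
    refine ⟨⌈u⌉₊, Nat.ceil_pos.mpr hu0, Nat.ceil_le.mpr hun, ?_⟩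
    have hur : u ≤ (⌈u⌉₊ : ℝ) := Nat.le_ceil u
    have hru : ((⌈u⌉₊ : ℕ) : ℝ) < u + 1 := Nat.ceil_lt_add_one hu0.le
    have h1 : u ^ α = (n:ℝ) ^ α * (1 - y) := by
      rw [hud, Real.mul_rpow hn0.le hv0.le, hvα]
    have h2 : b * u ^ α = X - 1 / α := by
      rw [h1]
      linear_combination (-(1 - y)) * hX - hXy
    have h3 : u ^ α ≤ ((⌈u⌉₊ : ℕ) : ℝ) ^ α := Real.rpow_le_rpow hu0.le hur hα0.le
    have hrα : X - 1 / α ≤ b * ((⌈u⌉₊ : ℕ) : ℝ) ^ α := by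
      have := mul_le_mul_of_nonneg_left h3 hb.le
      linarith [h2]
    have hnr : (n:ℝ) * y ≤ (n:ℝ) - (⌈u⌉₊ : ℕ) + 1 := by
      have := mul_le_mul_of_nonneg_left hv1 hn0.le
      linarith [hru, hud]
    calc (n:ℝ) / (α * X) * Real.exp (X - 1 / α)
        = Real.exp (X - 1 / α) * ((n:ℝ) * y) := by rw [hyd]; ring
      _ ≤ Real.exp (b * ((⌈u⌉₊ : ℕ) : ℝ) ^ α) * ((n:ℝ) - (⌈u⌉₊ : ℕ) + 1) :=
          mul_le_mul (Real.exp_le_exp.mpr hrα) hnr (by positivity) (Real.exp_pos _).le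

/-- The Følner function of `(G,S)`: the smallest cardinality of a finite nonempty
set `D` with `n·|∂_S D| ≤ |D|`, or `∞` if no such set exists. -/
noncomputable def folner (S : Finset G) (n : ℕ) : ℕ∞ :=
  ⨅ (D : Finset G) (_ : D.Nonempty) (_ : n * (innerBoundary S D).card ≤ D.card),
    (D.card : ℕ∞)

theorem stmt11 (S : Finset G)
    (hsymm : ∀ s ∈ S, s⁻¹ ∈ S) (hgen : Subgroup.closure (S : Set G) = ⊤)
    (C b α : ℝ) (hC : 0 < C) (hb : 0 < b) (hα0 : 0 < α) (hα1 : α ≤ 1)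
    (hgrowth : ∀ n : ℕ, 1 ≤ n →
      C * Real.exp (b * (n : ℝ) ^ α) ≤ ((wordBall S (n - 1)).card : ℝ))
    (n : ℕ) (hn : 1 ≤ n) (hbn : 1 ≤ b * (n : ℝ) ^ α)
    (F : ℕ) (hF : folner S n = (F : ℕ∞)) :
    C / (α * b * (n : ℝ) ^ α) * Real.exp (b * (n : ℝ) ^ α - 1 / α) ≤ (F : ℝ) := by
  -- extract a Følner set D with |D| ≤ F
  have hlt : folner S n < ((F + 1 : ℕ) : ℕ∞) := by
    rw [hF]; exact_mod_cast Nat.lt_succ_self F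
  rw [folner, iInf_lt_iff] at hlt
  obtain ⟨D, hlt⟩ := hlt
  rw [iInf_lt_iff] at hlt
  obtain ⟨hne, hlt⟩ := hlt
  rw [iInf_lt_iff] at hlt
  obtain ⟨hfol, hlt⟩ := hlt
  have hDF : D.card ≤ F := by
    have : D.card < F + 1 := by exact_mod_cast hlt
    omega
  have hn' : (1:ℝ) ≤ (n:ℝ) := by exact_mod_cast hn
  have hn0 : (0:ℝ) < (n:ℝ) := by linarith
  have hc0 : (0:ℝ) < (D.card : ℝ) := by
    exact_mod_cast Finset.card_pos.mpr hne
  have hβ : (n:ℝ) * ((innerBoundary S D).card : ℝ) ≤ (D.card : ℝ) := by exact_mod_cast hfol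
  have hβ0 : (0:ℝ) ≤ ((innerBoundary S D).card : ℝ) := Nat.cast_nonneg _
  -- key inequality for each radius r
  have hkey : ∀ r : ℕ, 1 ≤ r → r ≤ n →
      C * Real.exp (b * (r:ℝ) ^ α) * ((n:ℝ) - r + 1) ≤ (n:ℝ) * (D.card : ℝ) := by
    intro r hr1 hrn
    have hr1' : (1:ℝ) ≤ (r:ℝ) := by exact_mod_cast hr1
    have hrn' : (r:ℝ) ≤ (n:ℝ) := by exact_mod_cast hrn
    have hcount := count_lemma S hsymm D (r - 1)
    have hcount' : ((wordBall S (r-1)).card : ℝ) * (D.card : ℝ) ≤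
        (D.card : ℝ) ^ 2 + ((wordBall S (r-1)).card : ℝ) *
          (((r:ℝ) - 1) * ((innerBoundary S D).card : ℝ)) := by
      have hcast : (((r - 1 : ℕ)) : ℝ) = (r:ℝ) - 1 := by
        rw [Nat.cast_sub hr1, Nat.cast_one]
      exact_mod_cast hcast ▸ (by exact_mod_cast hcount :
        ((wordBall S (r-1)).card : ℝ) * (D.card : ℝ) ≤
        (D.card : ℝ) ^ 2 + ((wordBall S (r-1)).card : ℝ) *
          ((((r - 1 : ℕ)) : ℝ) * ((innerBoundary S D).card : ℝ)))
    have hγ0 : (0:ℝ) ≤ ((wordBall S (r-1)).card : ℝ) := Nat.cast_nonneg _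
    have hγ : C * Real.exp (b * (r:ℝ) ^ α) ≤ ((wordBall S (r-1)).card : ℝ) := hgrowth r hr1
    have h1 : ((wordBall S (r-1)).card : ℝ) * ((n:ℝ) - r + 1) ≤ (n:ℝ) * (D.card : ℝ) := by
      nlinarith [mul_le_mul_of_nonneg_left hcount' hn0.le,
        mul_le_mul_of_nonneg_left hβ (mul_nonneg hγ0 (by linarith : (0:ℝ) ≤ (r:ℝ) - 1)),
        mul_pos hn0 hc0, hc0]
    calc C * Real.exp (b * (r:ℝ) ^ α) * ((n:ℝ) - r + 1)
        ≤ ((wordBall S (r-1)).card : ℝ) * ((n:ℝ) - r + 1) :=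
          mul_le_mul_of_nonneg_right hγ (by linarith)
      _ ≤ (n:ℝ) * (D.card : ℝ) := h1
  obtain ⟨r, hr1, hrn, hrchoice⟩ := chooseR C b α hC hb hα0 hα1 n hn hbn
  have hmain : (n:ℝ) * (C / (α * (b * (n:ℝ) ^ α)) * Real.exp (b * (n:ℝ) ^ α - 1 / α)) ≤
      (n:ℝ) * (D.card : ℝ) := by
    calc (n:ℝ) * (C / (α * (b * (n:ℝ) ^ α)) * Real.exp (b * (n:ℝ) ^ α - 1 / α))
        = C * ((n:ℝ) / (α * (b * (n:ℝ) ^ α)) * Real.exp (b * (n:ℝ) ^ α - 1 / α)) := by ring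
      _ ≤ C * (Real.exp (b * (r:ℝ) ^ α) * ((n:ℝ) - r + 1)) :=
          mul_le_mul_of_nonneg_left hrchoice hC.le
      _ = C * Real.exp (b * (r:ℝ) ^ α) * ((n:ℝ) - r + 1) := by ring
      _ ≤ (n:ℝ) * (D.card : ℝ) := hkey r hr1 hrn
  have hfin : C / (α * (b * (n:ℝ) ^ α)) * Real.exp (b * (n:ℝ) ^ α - 1 / α) ≤ (D.card : ℝ) :=
    le_of_mul_le_mul_left hmain hn0
  have hcF : (D.card : ℝ) ≤ (F : ℝ) := by exact_mod_cast hDF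
  rw [mul_assoc]
  linarith
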